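/- Let F and G be filtrations on an algebra R sharing a common adapted basis B. Then for any b ∈ B, the quasivaluation of the sum filtration satisfies v_{F⊕G}(b) = v_F(b) + v_G(b), where (F⊕G)_r = Σ_{r₁+r₂=r} F_{r₁} ∩ G_{r₂}. -/

import Mathlib

variable {k R : Type*} [Field k] [CommRing R] [Algebra k R]

/-- The sum `F ⊕ G` of two filtrations:
`(F ⊕ G)_r = Σ_{r₁ + r₂ = r} F_{r₁} ∩ G_{r₂}`. -/
noncomputable def filtSum (F G : ℚ → Submodule k R) : ℚ → Submodule k R :=
  fun r => ⨆ p : {p : ℚ × ℚ // p.1 + p.2 = r}, (F p.1.1 ⊓ G p.1.2)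

/-- let `F` and `G` be (decreasing) filtrations on an algebra `R`
sharing a common adapted basis `B`.  For `b ∈ B`, the quasivaluation of a
filtration is `v_F(b) = max {r : b ∈ F_r}`; here the statement
`v_F(b) = r` is rendered as `b ∈ F r ∧ ∀ r' > r, b ∉ F r'`.  Then
`v_{F⊕G}(b) = v_F(b) + v_G(b)`. -/
theorem filtSum_quasival_add
    (F G : ℚ → Submodule k R)
    (hFanti : Antitone F) (hGanti : Antitone G)
    (B : Set R)
    (hind : LinearIndependent k ((↑) : B → R))
    (hspan : Submodule.span k B = ⊤)
    (hFadapt : ∀ r, Submodule.span k (B ∩ (F r : Set R)) = F r)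
    (hGadapt : ∀ r, Submodule.span k (B ∩ (G r : Set R)) = G r)
    (b : R) (hb : b ∈ B) (r s : ℚ)
    (hbF : b ∈ F r ∧ ∀ r', r < r' → b ∉ F r')
    (hbG : b ∈ G s ∧ ∀ s', s < s' → b ∉ G s') :
    b ∈ filtSum F G (r + s) ∧ ∀ t, r + s < t → b ∉ filtSum F G t := by
  classical
  obtain ⟨hbF1, hbF2⟩ := hbF
  obtain ⟨hbG1, hbG2⟩ := hbG
  constructor
  · exact le_iSup (fun p : {p : ℚ × ℚ // p.1 + p.2 = r + s} => F p.1.1 ⊓ G p.1.2)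
      ⟨(r, s), rfl⟩ ⟨hbF1, hbG1⟩
  · intro t ht hbt
    set bB : Module.Basis B k R := Module.Basis.mk hind (by rw [Subtype.range_coe]; exact hspan.ge)
      with hbB
    set φ := bB.coord ⟨b, hb⟩ with hφ
    have hφb : φ b = 1 := by
      have : φ (bB ⟨b, hb⟩) = 1 := by
        simp [hφ, Module.Basis.coord_apply, Module.Basis.repr_self]
      simpa [hbB, Module.Basis.mk_apply] using this
    have hφ0 : ∀ x ∈ B, x ≠ b → φ x = 0 := by
      intro x hx hne
      have : φ (bB ⟨x, hx⟩) = 0 := by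
        simp [hφ, Module.Basis.coord_apply, Module.Basis.repr_self, Finsupp.single_apply,
          Subtype.ext_iff, hne, Ne.symm hne]
      simpa [hbB, Module.Basis.mk_apply] using this
    have key : filtSum F G t ≤ LinearMap.ker φ := by
      show (⨆ p : {p : ℚ × ℚ // p.1 + p.2 = t}, (F p.1.1 ⊓ G p.1.2)) ≤ _
      apply iSup_le
      rintro ⟨⟨p₁, p₂⟩, hp⟩
      rcases lt_or_ge r p₁ with h1 | h1
      · refine le_trans inf_le_left ?_
        rw [← hFadapt p₁]
        refine Submodule.span_le.mpr ?_
        rintro x ⟨hxB, hxF⟩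
        exact hφ0 x hxB (fun h => hbF2 p₁ h1 (h ▸ hxF))
      · refine le_trans inf_le_right ?_
        have h2 : s < p₂ := by simp only at hp; linarith
        rw [← hGadapt p₂]
        refine Submodule.span_le.mpr ?_
        rintro x ⟨hxB, hxG⟩
        exact hφ0 x hxB (fun h => hbG2 p₂ h2 (h ▸ hxG))
    have h0 := key hbt
    rw [LinearMap.mem_ker] at h0
    rw [h0] at hφb
    exact one_ne_zero hφb.symm
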